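/- Let m ∈ ℕ, let Y, A : Fin m → ℝ take values in {0,1}, let r : Fin m → ℝ be nonnegative, and let λ : Fin m → ℝ. Let X be the m × 2 real matrix with columns X_{i,0} = Y_i and X_{i,1} = Y_i·A_i and let R be the m × m diagonal matrix with diagonal entries Y_i·r_i. Assume a := ∑_i r_i·Y_i·(1 − A_i) > 0 and b := ∑_i r_i·Y_i·A_i > 0. Then the vector (Xᵀ R X)^{−1} Xᵀ R λ ∈ ℝ² has first component H⁰ := (∑_i r_i·Y_i·(1 − A_i)·λ_i)/a and second component H¹ − H⁰, where H¹ := (∑_i r_i·Y_i·A_i·λ_i)/b; i.e. the weighted least-squares integrand of the additive hazard estimator is (H⁰, H¹ − H⁰). -/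
import Mathlib


open Matrix BigOperators

/-- The weighted least-squares integrand of the additive hazard estimator: with positive
weighted risk-group sums `a` and `b`, the vector `(XᵀRX)⁻¹ XᵀR λ` equals `(H⁰, H¹ − H⁰)`,
where `H⁰` and `H¹` are the weighted averages of `λ` over the untreated and treated at-risk
groups. -/
theorem weighted_least_squares_integrand
    (m : ℕ) (Y A : Fin m → ℝ)
    (hY : ∀ i, Y i = 0 ∨ Y i = 1) (hA : ∀ i, A i = 0 ∨ A i = 1)
    (r : Fin m → ℝ) (hr : ∀ i, 0 ≤ r i)
    (lam : Fin m → ℝ)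
    (X : Matrix (Fin m) (Fin 2) ℝ)
    (hX : ∀ i, X i 0 = Y i ∧ X i 1 = Y i * A i)
    (R : Matrix (Fin m) (Fin m) ℝ)
    (hR : R = Matrix.diagonal fun i => Y i * r i)
    (a b : ℝ)
    (ha' : a = ∑ i, r i * Y i * (1 - A i)) (hb' : b = ∑ i, r i * Y i * A i)
    (ha : 0 < a) (hb : 0 < b)
    (H0 H1 : ℝ)
    (hH0 : H0 = (∑ i, r i * Y i * (1 - A i) * lam i) / a)
    (hH1 : H1 = (∑ i, r i * Y i * A i * lam i) / b) :
    ((Xᵀ * R * X)⁻¹ * Xᵀ * R) *ᵥ lam = ![H0, H1 - H0] := by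
  have ha0 : a ≠ 0 := ne_of_gt ha
  have hb0 : b ≠ 0 := ne_of_gt hb
  have hX0 : ∀ i, X i 0 = Y i := fun i => (hX i).1
  have hX1 : ∀ i, X i 1 = Y i * A i := fun i => (hX i).2
  have hM : Xᵀ * R * X = !![a + b, b; b, b] := by
    subst hR
    ext i j
    rw [Matrix.mul_apply]
    simp only [Matrix.mul_diagonal, Matrix.transpose_apply]
    fin_cases i <;> fin_cases j <;>
      simp only [Matrix.cons_val', Matrix.cons_val_zero, Matrix.cons_val_one, Matrix.head_cons,
        Matrix.empty_val', Matrix.cons_val_fin_one, Matrix.head_fin_const,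
        Fin.isValue, Fin.zero_eta, Fin.mk_one, Matrix.of_apply] <;>
      [skip; rw [hb']; rw [hb']; rw [hb']] <;>
      [rw [ha', hb', ← Finset.sum_add_distrib]; skip; skip; skip] <;>
      refine Finset.sum_congr rfl fun k _ => ?_ <;>
      simp only [hX0, hX1] <;>
      rcases hY k with h | h <;> rcases hA k with h' | h' <;> simp [h, h'] <;> ring
  have hinv : (Xᵀ * R * X)⁻¹ = (a * b)⁻¹ • !![b, -b; -b, a + b] := by
    apply Matrix.inv_eq_right_inv
    rw [hM]
    ext i j
    fin_cases i <;> fin_cases j <;>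
      simp [Matrix.mul_apply, Fin.sum_univ_two, Matrix.smul_apply] <;>
      field_simp <;> ring
  funext i
  rw [hinv]
  simp only [Matrix.mulVec, dotProduct]
  simp only [hR, Matrix.mul_diagonal]
  simp only [Matrix.mul_apply, Fin.sum_univ_two, Matrix.smul_apply, Matrix.transpose_apply,
    smul_eq_mul, hX0, hX1]
  fin_cases i <;>
    simp only [Matrix.cons_val_zero, Matrix.cons_val_one, Matrix.head_cons, Fin.isValue,
      Fin.zero_eta, Fin.mk_one, Matrix.of_apply, Matrix.cons_val', Matrix.empty_val',
      Matrix.cons_val_fin_one, Matrix.head_fin_const]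
  · rw [hH0, Finset.sum_div]
    refine Finset.sum_congr rfl fun k _ => ?_
    rcases hY k with h | h <;> rcases hA k with h' | h' <;> simp [h, h'] <;> field_simp <;> ring
  · rw [hH0, hH1, Finset.sum_div, Finset.sum_div, ← Finset.sum_sub_distrib]
    refine Finset.sum_congr rfl fun k _ => ?_
    rcases hY k with h | h <;> rcases hA k with h' | h' <;> simp [h, h'] <;> field_simp <;> ring
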